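/- For every α ∈ (0,1], there exists an instance with 2 agents and 4 goods, with identical additive subjective utilities u (giving value 1 to each good) and an additive market valuation v (with v(g_1) = 2/α + 1 and v(g_t) = 1 for t ∈ {2,3,4}), such that no allocation is simultaneously EF1 with respect to u and α-EFX with respect to v. -/
import Mathlib


open Finset

/-- EF1 condition for an ordered pair of bundles under additive valuation `w`. -/
def EF1pair {M : Type*} [DecidableEq M] (w : M → ℝ) (X Y : Finset M) : Prop :=
  Y = ∅ ∨ ∃ g ∈ Y, (∑ x ∈ Y.erase g, w x) ≤ ∑ x ∈ X, w x

/-- `α`-EFX condition for an ordered pair of bundles under additive valuation `w`. -/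
def EFXpair {M : Type*} [DecidableEq M] (α : ℝ) (w : M → ℝ) (X Y : Finset M) : Prop :=
  Y = ∅ ∨ ∀ g ∈ Y, α * (∑ x ∈ Y.erase g, w x) ≤ ∑ x ∈ X, w x

lemma key_aux (α : ℝ) (hα0 : 0 < α) (v : Fin 4 → ℝ)
    (hv : v = ![2 / α + 1, 1, 1, 1])
    (A B : Finset (Fin 4)) (hdis : Disjoint A B)
    (hA : A.card = 2) (hB : B.card = 2) (h0 : (0 : Fin 4) ∈ A) :
    ¬ EFXpair α v B A := by
  intro hEFX
  have hAne : A ≠ ∅ := by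
    intro h; rw [h] at hA; simp at hA
  rcases hEFX with h | h
  · exact hAne h
  obtain ⟨a, b, hab, hAeq⟩ := Finset.card_eq_two.mp hA
  -- make A = {0, j} with j ≠ 0
  obtain ⟨j, hj0, hAj⟩ : ∃ j : Fin 4, j ≠ 0 ∧ A = {0, j} := by
    rw [hAeq] at h0
    rcases Finset.mem_insert.mp h0 with h | h
    · exact ⟨b, by rw [← h] at hab; exact Ne.symm hab, by rw [hAeq, h]⟩
    · have hb : b = 0 := (Finset.mem_singleton.mp h).symm
      exact ⟨a, hb ▸ hab, by
        rw [hAeq, hb, Finset.pair_comm]⟩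
  have hjA : j ∈ A := by rw [hAj]; simp
  have hkey := h j hjA
  have herase : A.erase j = {0} := by
    rw [hAj, Finset.pair_comm, Finset.erase_insert (by simpa using hj0)]
  have hsumA : ∑ x ∈ A.erase j, v x = 2 / α + 1 := by
    rw [herase, Finset.sum_singleton, hv]; rfl
  have hsumB : ∑ x ∈ B, v x = 2 := by
    have : ∀ x ∈ B, v x = 1 := by
      intro x hx
      have hx0 : x ≠ 0 := by
        intro h; exact (Finset.disjoint_left.mp hdis h0) (h ▸ hx)
      fin_cases x <;> simp_all [hv]
    rw [Finset.sum_congr rfl this, Finset.sum_const, hB]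
    norm_num
  rw [hsumA, hsumB] at hkey
  have : α * (2 / α + 1) = 2 + α := by field_simp
  rw [this] at hkey
  linarith


/-- For any `α ∈ (0,1]`: in the instance with 2 agents and 4 goods, `u ≡ 1`
and `v = (2/α + 1, 1, 1, 1)`, no allocation is simultaneously EF1 w.r.t. `u`
and `α`-EFX w.r.t. `v`. -/
theorem stmt_8 (α : ℝ) (hα0 : 0 < α) (hα1 : α ≤ 1)
    (u v : Fin 4 → ℝ) (hu : ∀ g, u g = 1) (hv : v = ![2 / α + 1, 1, 1, 1]) :
    ∀ A₁ A₂ : Finset (Fin 4), Disjoint A₁ A₂ → A₁ ∪ A₂ = Finset.univ →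
      ¬ (EF1pair u A₁ A₂ ∧ EF1pair u A₂ A₁ ∧
          EFXpair α v A₁ A₂ ∧ EFXpair α v A₂ A₁) := by
  intro A₁ A₂ hdis huni ⟨h1, h2, h3, h4⟩
  have hsum : ∀ S : Finset (Fin 4), ∑ x ∈ S, u x = S.card := by
    intro S; simp [hu]
  have hcard : A₁.card + A₂.card = 4 := by
    rw [← Finset.card_union_of_disjoint hdis, huni]
    simp
  -- neither is empty
  have hne1 : A₁ ≠ ∅ := by
    rintro rfl
    rcases h1 with h | ⟨g, hg, hle⟩
    · rw [h] at hcard; simp at hcard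
    · rw [hsum, hsum] at hle
      have hgc : 1 ≤ A₂.card := Finset.card_pos.mpr ⟨g, hg⟩
      have hec : (A₂.erase g).card = A₂.card - 1 := Finset.card_erase_of_mem hg
      rw [hec] at hle
      simp only [Finset.card_empty] at hle hcard
      have : A₂.card - 1 ≤ 0 := by exact_mod_cast hle
      omega
  have hne2 : A₂ ≠ ∅ := by
    rintro rfl
    rcases h2 with h | ⟨g, hg, hle⟩
    · rw [h] at hcard; simp at hcard
    · rw [hsum, hsum] at hle
      have hec : (A₁.erase g).card = A₁.card - 1 := Finset.card_erase_of_mem hg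
      rw [hec] at hle
      simp only [Finset.card_empty] at hle hcard
      have : A₁.card - 1 ≤ 0 := by exact_mod_cast hle
      omega
  -- cards are both 2
  have hle1 : A₂.card - 1 ≤ A₁.card := by
    rcases h1 with h | ⟨g, hg, hle⟩
    · exact absurd h hne2
    · rw [hsum, hsum, Finset.card_erase_of_mem hg] at hle
      exact_mod_cast hle
  have hle2 : A₁.card - 1 ≤ A₂.card := by
    rcases h2 with h | ⟨g, hg, hle⟩
    · exact absurd h hne1
    · rw [hsum, hsum, Finset.card_erase_of_mem hg] at hle
      exact_mod_cast hle
  have hc1 : A₁.card = 2 := by omega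
  have hc2 : A₂.card = 2 := by omega
  have h0 : (0 : Fin 4) ∈ A₁ ∪ A₂ := by rw [huni]; exact Finset.mem_univ 0
  rcases Finset.mem_union.mp h0 with h0 | h0
  · exact key_aux α hα0 v hv A₁ A₂ hdis hc1 hc2 h0 h4
  · exact key_aux α hα0 v hv A₂ A₁ hdis.symm hc2 hc1 h0 h3
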